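/- Let p₁, p₂, p₃, p₄ be complex numbers with K := (p₂ − p₁)(p₄ − p₃) ≠ 0, and define Λ : ℂ → ℂ by Λ(z) = ((z·p₄ − p₁)(p₂ − z·p₃)) / (z·K). Then for every z ≠ 0 the derivative of Λ satisfies (z·K·Λ′(z))² = (K·Λ(z) − p₂p₄ − p₁p₃)² − 4·p₁p₂p₃p₄. (Equivalently, dz/z = (p₂ − p₁)(p₄ − p₃)·dλ/√(f₂(λ)), where f₂(λ) = (λK − p₂p₄ − p₁p₃)² − 4p₁p₂p₃p₄ is the discriminant of the defining quadratic equation λ·z·(p₂−p₁)(p₄−p₃) = (z·p₄ − p₁)(p₂ − z·p₃) viewed as a quadratic in z.) -/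

import Mathlib

theorem scattering_amplitude_two_channel_form_identity
    (p₁ p₂ p₃ p₄ : ℂ) (hK : (p₂ - p₁) * (p₄ - p₃) ≠ 0) :
    ∀ z : ℂ, z ≠ 0 →
      (z * ((p₂ - p₁) * (p₄ - p₃)) *
          deriv (fun w : ℂ =>
            ((w * p₄ - p₁) * (p₂ - w * p₃)) / (w * ((p₂ - p₁) * (p₄ - p₃)))) z) ^ 2
        = (((p₂ - p₁) * (p₄ - p₃)) *
              (((z * p₄ - p₁) * (p₂ - z * p₃)) / (z * ((p₂ - p₁) * (p₄ - p₃))))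
            - p₂ * p₄ - p₁ * p₃) ^ 2
          - 4 * (p₁ * p₂ * p₃ * p₄) := by
  intro z hz
  set K := (p₂ - p₁) * (p₄ - p₃) with hKdef
  have hzK : z * K ≠ 0 := mul_ne_zero hz hK
  have hn : HasDerivAt (fun w : ℂ => (w * p₄ - p₁) * (p₂ - w * p₃))
      (p₄ * (p₂ - z * p₃) + (z * p₄ - p₁) * (-p₃)) z := by
    have h1 : HasDerivAt (fun w : ℂ => w * p₄ - p₁) p₄ z := by
      simpa using ((hasDerivAt_id z).mul_const p₄).sub_const p₁
    have h2 : HasDerivAt (fun w : ℂ => p₂ - w * p₃) (-p₃) z := by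
      simpa using (HasDerivAt.const_sub p₂ ((hasDerivAt_id z).mul_const p₃))
    simpa using h1.fun_mul h2
  have hd : HasDerivAt (fun w : ℂ => w * K) K z := by
    simpa using (hasDerivAt_id z).mul_const K
  have hdiv := hn.fun_div hd hzK
  rw [hdiv.deriv]
  field_simp
  ring
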